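/- Let p be an odd prime and let (x, y, z) ∈ 𝔽_p³ satisfy x² + y² + z² − xyz = 4 (a singular triple). Then no coordinate of (x, y, z) is hyperbolic while another coordinate is elliptic; moreover exactly one of the following holds: (i) at least two of the coordinates are hyperbolic, (ii) at least two of the coordinates are elliptic, (iii) all three coordinates are parabolic. -/
import Mathlib

/-- `t` is hyperbolic: `t² - 4` is a nonzero square. -/
def IsHyperbolic {p : ℕ} (t : ZMod p) : Prop :=
  ∃ a : ZMod p, a ≠ 0 ∧ t ^ 2 - 4 = a ^ 2

/-- `t` is elliptic: `t² - 4` is not a square. -/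
def IsElliptic {p : ℕ} (t : ZMod p) : Prop :=
  ¬ ∃ a : ZMod p, t ^ 2 - 4 = a ^ 2

/-- `t` is parabolic: `t = ±2`. -/
def IsParabolic {p : ℕ} (t : ZMod p) : Prop :=
  t = 2 ∨ t = -2

section Aux
variable {p : ℕ} [Fact p.Prime]

lemma hyp_not_ell {t : ZMod p} (h : IsHyperbolic t) : ¬ IsElliptic t := by
  obtain ⟨a, _, ha⟩ := h
  exact fun he => he ⟨a, ha⟩

lemma hyp_not_par {t : ZMod p} (h : IsHyperbolic t) : ¬ IsParabolic t := by
  obtain ⟨a, ha, heq⟩ := h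
  rintro (rfl | rfl) <;>
  · have h0 : a ^ 2 = 0 := by rw [← heq]; ring
    exact ha (pow_eq_zero_iff two_ne_zero |>.mp h0)

lemma par_not_ell {t : ZMod p} (h : IsParabolic t) : ¬ IsElliptic t := by
  intro he
  exact he ⟨0, by rcases h with rfl | rfl <;> ring⟩

lemma ell_not_par {t : ZMod p} (h : IsElliptic t) : ¬ IsParabolic t :=
  fun hp' => par_not_ell hp' h

lemma par_of {t : ZMod p} (h : t ^ 2 - 4 = 0) : IsParabolic t := by
  have h' : (t - 2) * (t + 2) = 0 := by linear_combination h
  rcases mul_eq_zero.mp h' with h0 | h0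
  · exact Or.inl (sub_eq_zero.mp h0)
  · exact Or.inr (eq_neg_of_add_eq_zero_left h0)

lemma trich (t : ZMod p) : IsHyperbolic t ∨ IsParabolic t ∨ IsElliptic t := by
  by_cases he : IsElliptic t
  · exact Or.inr (Or.inr he)
  · obtain ⟨a, ha⟩ := not_not.mp he
    by_cases h0 : a = 0
    · exact Or.inr (Or.inl (par_of (by rw [ha, h0]; ring)))
    · exact Or.inl ⟨a, h0, ha⟩

lemma spreadH {x y c : ZMod p} (hd : (x ^ 2 - 4) * (y ^ 2 - 4) = c ^ 2)
    (hx : IsHyperbolic x) : IsHyperbolic y ∨ IsParabolic y := by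
  obtain ⟨a, ha, hax⟩ := hx
  by_cases hy : y ^ 2 - 4 = 0
  · exact Or.inr (par_of hy)
  · left
    have ha2 : a ^ 2 ≠ 0 := pow_ne_zero _ ha
    have key : (y ^ 2 - 4) * a ^ 2 = c ^ 2 := by rw [← hax]; linear_combination hd
    refine ⟨c / a, ?_, ?_⟩
    · intro h0
      have hc : c = 0 := by
        rcases div_eq_zero_iff.mp h0 with h | h
        · exact h
        · exact absurd h ha
      rw [hc] at key
      have hkey0 : (y ^ 2 - 4) * a ^ 2 = 0 := by rw [key]; ring
      exact hy ((mul_eq_zero.mp hkey0).resolve_right ha2)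
    · rw [div_pow, eq_div_iff ha2]; exact key

lemma spreadE {x y c : ZMod p} (hd : (x ^ 2 - 4) * (y ^ 2 - 4) = c ^ 2)
    (hx : IsElliptic x) : IsElliptic y ∨ IsParabolic y := by
  by_cases hy : IsElliptic y
  · exact Or.inl hy
  · obtain ⟨b, hb⟩ := not_not.mp hy
    by_cases h0 : b = 0
    · exact Or.inr (par_of (by rw [hb, h0]; ring))
    · exfalso
      have hb2 : b ^ 2 ≠ 0 := pow_ne_zero _ h0
      refine hx ⟨c / b, ?_⟩
      rw [div_pow, eq_div_iff hb2, ← hb]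
      linear_combination hd

lemma noHE {x y c : ZMod p} (hd : (x ^ 2 - 4) * (y ^ 2 - 4) = c ^ 2)
    (hx : IsHyperbolic x) (hy : IsElliptic y) : False := by
  rcases spreadH hd hx with h | h
  · exact hyp_not_ell h hy
  · exact par_not_ell h hy

lemma parThird {x y z : ZMod p} (h2 : (2 : ZMod p) ≠ 0)
    (hs : x ^ 2 + y ^ 2 + z ^ 2 - x * y * z = 4)
    (hy : IsParabolic y) (hz : IsParabolic z) : IsParabolic x := by
  have hy2 : y ^ 2 = 4 := by rcases hy with rfl | rfl <;> ring
  have hz2 : z ^ 2 = 4 := by rcases hz with rfl | rfl <;> ring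
  have h0 : (2 * x - y * z) ^ 2 = 0 := by
    linear_combination 4 * hs + (z ^ 2 - 4) * hy2
  have h1 : 2 * x - y * z = 0 := pow_eq_zero_iff two_ne_zero |>.mp h0
  have h4 : (4 : ZMod p) ≠ 0 := by
    have := mul_ne_zero h2 h2
    norm_num at this
    exact this
  have hkey : (4 : ZMod p) * (x ^ 2 - 4) = 0 := by
    linear_combination (2 * x + y * z) * h1 + z ^ 2 * hy2 + 4 * hz2
  exact par_of ((mul_eq_zero.mp hkey).resolve_left h4)

lemma disc {x y z : ZMod p} (hs : x ^ 2 + y ^ 2 + z ^ 2 - x * y * z = 4) :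
    (x ^ 2 - 4) * (y ^ 2 - 4) = (2 * z - x * y) ^ 2 := by
  linear_combination (-4 : ZMod p) * hs

end Aux

theorem singular_triple_geometry (p : ℕ) (hp : p.Prime) (hodd : p ≠ 2) (x y z : ZMod p)
    (hsing : x ^ 2 + y ^ 2 + z ^ 2 - x * y * z = 4) :
    (∀ s t : ZMod p, (s = x ∨ s = y ∨ s = z) → (t = x ∨ t = y ∨ t = z) →
      ¬ (IsHyperbolic s ∧ IsElliptic t)) ∧
    ((((IsHyperbolic x ∧ IsHyperbolic y) ∨ (IsHyperbolic x ∧ IsHyperbolic z) ∨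
        (IsHyperbolic y ∧ IsHyperbolic z)) ∧
      ¬ ((IsElliptic x ∧ IsElliptic y) ∨ (IsElliptic x ∧ IsElliptic z) ∨
        (IsElliptic y ∧ IsElliptic z)) ∧
      ¬ (IsParabolic x ∧ IsParabolic y ∧ IsParabolic z)) ∨
    (¬ ((IsHyperbolic x ∧ IsHyperbolic y) ∨ (IsHyperbolic x ∧ IsHyperbolic z) ∨
        (IsHyperbolic y ∧ IsHyperbolic z)) ∧
      ((IsElliptic x ∧ IsElliptic y) ∨ (IsElliptic x ∧ IsElliptic z) ∨
        (IsElliptic y ∧ IsElliptic z)) ∧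
      ¬ (IsParabolic x ∧ IsParabolic y ∧ IsParabolic z)) ∨
    (¬ ((IsHyperbolic x ∧ IsHyperbolic y) ∨ (IsHyperbolic x ∧ IsHyperbolic z) ∨
        (IsHyperbolic y ∧ IsHyperbolic z)) ∧
      ¬ ((IsElliptic x ∧ IsElliptic y) ∨ (IsElliptic x ∧ IsElliptic z) ∨
        (IsElliptic y ∧ IsElliptic z)) ∧
      (IsParabolic x ∧ IsParabolic y ∧ IsParabolic z))) := by
  haveI : Fact p.Prime := ⟨hp⟩
  have h2 : (2 : ZMod p) ≠ 0 := by
    have : ((2 : ℕ) : ZMod p) ≠ 0 := by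
      rw [Ne, ZMod.natCast_eq_zero_iff]
      intro h
      exact hodd ((Nat.prime_dvd_prime_iff_eq hp Nat.prime_two).mp h)
    simpa using this
  have hs_y : y ^ 2 + x ^ 2 + z ^ 2 - y * x * z = 4 := by linear_combination hsing
  have hs_z : z ^ 2 + x ^ 2 + y ^ 2 - z * x * y = 4 := by linear_combination hsing
  have hs_yz : x ^ 2 + z ^ 2 + y ^ 2 - x * z * y = 4 := by linear_combination hsing
  have hs_yzx : y ^ 2 + z ^ 2 + x ^ 2 - y * z * x = 4 := by linear_combination hsing
  have dxy := disc hsing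
  have dxz := disc hs_yz
  have dyz := disc hs_yzx
  have dyx : (y ^ 2 - 4) * (x ^ 2 - 4) = (2 * z - x * y) ^ 2 := by linear_combination dxy
  have dzx : (z ^ 2 - 4) * (x ^ 2 - 4) = (2 * y - x * z) ^ 2 := by linear_combination dxz
  have dzy : (z ^ 2 - 4) * (y ^ 2 - 4) = (2 * x - y * z) ^ 2 := by linear_combination dyz
  constructor
  · rintro s t hs ht ⟨hH, hE⟩
    rcases hs with rfl | rfl | rfl <;> rcases ht with rfl | rfl | rfl
    · exact hyp_not_ell hH hE
    · exact noHE dxy hH hE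
    · exact noHE dxz hH hE
    · exact noHE dyx hH hE
    · exact hyp_not_ell hH hE
    · exact noHE dyz hH hE
    · exact noHE dzx hH hE
    · exact noHE dzy hH hE
    · exact hyp_not_ell hH hE
  · rcases trich x with hx | hx | hx
    · -- x hyperbolic
      rcases spreadH dxy hx with hy | hy
      · left
        refine ⟨Or.inl ⟨hx, hy⟩, ?_, ?_⟩
        · rintro (⟨e, _⟩ | ⟨e, _⟩ | ⟨e, _⟩)
          · exact hyp_not_ell hx e
          · exact hyp_not_ell hx e
          · exact hyp_not_ell hy e
        · rintro ⟨px, _, _⟩; exact hyp_not_par hx px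
      · rcases spreadH dxz hx with hz | hz
        · left
          refine ⟨Or.inr (Or.inl ⟨hx, hz⟩), ?_, ?_⟩
          · rintro (⟨e, _⟩ | ⟨e, _⟩ | ⟨_, e⟩)
            · exact hyp_not_ell hx e
            · exact hyp_not_ell hx e
            · exact hyp_not_ell hz e
          · rintro ⟨px, _, _⟩; exact hyp_not_par hx px
        · exact absurd (parThird h2 hsing hy hz) (hyp_not_par hx)
    · -- x parabolic
      rcases trich y with hy | hy | hy
      · rcases spreadH dyz hy with hz | hz
        · left
          refine ⟨Or.inr (Or.inr ⟨hy, hz⟩), ?_, ?_⟩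
          · rintro (⟨_, e⟩ | ⟨_, e⟩ | ⟨e, _⟩)
            · exact hyp_not_ell hy e
            · exact hyp_not_ell hz e
            · exact hyp_not_ell hy e
          · rintro ⟨_, py, _⟩; exact hyp_not_par hy py
        · exact absurd (parThird h2 hs_y hx hz) (hyp_not_par hy)
      · rcases trich z with hz | hz | hz
        · exact absurd (parThird h2 hs_z hx hy) (hyp_not_par hz)
        · right; right
          refine ⟨?_, ?_, hx, hy, hz⟩
          · rintro (⟨h, _⟩ | ⟨h, _⟩ | ⟨h, _⟩)
            · exact hyp_not_par h hx
            · exact hyp_not_par h hx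
            · exact hyp_not_par h hy
          · rintro (⟨e, _⟩ | ⟨e, _⟩ | ⟨e, _⟩)
            · exact par_not_ell hx e
            · exact par_not_ell hx e
            · exact par_not_ell hy e
        · exact absurd (parThird h2 hs_z hx hy) (ell_not_par hz)
      · rcases spreadE dyz hy with hz | hz
        · right; left
          refine ⟨?_, Or.inr (Or.inr ⟨hy, hz⟩), ?_⟩
          · rintro (⟨_, h⟩ | ⟨_, h⟩ | ⟨h, _⟩)
            · exact hyp_not_ell h hy
            · exact hyp_not_ell h hz
            · exact hyp_not_ell h hy
          · rintro ⟨_, py, _⟩; exact ell_not_par hy py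
        · exact absurd (parThird h2 hs_y hx hz) (ell_not_par hy)
    · -- x elliptic
      rcases spreadE dxy hx with hy | hy
      · right; left
        refine ⟨?_, Or.inl ⟨hx, hy⟩, ?_⟩
        · rintro (⟨h, _⟩ | ⟨h, _⟩ | ⟨h, _⟩)
          · exact hyp_not_ell h hx
          · exact hyp_not_ell h hx
          · exact hyp_not_ell h hy
        · rintro ⟨px, _, _⟩; exact ell_not_par hx px
      · rcases spreadE dxz hx with hz | hz
        · right; left
          refine ⟨?_, Or.inr (Or.inl ⟨hx, hz⟩), ?_⟩
          · rintro (⟨h, _⟩ | ⟨h, _⟩ | ⟨_, h⟩)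
            · exact hyp_not_ell h hx
            · exact hyp_not_ell h hx
            · exact hyp_not_ell h hz
          · rintro ⟨px, _, _⟩; exact ell_not_par hx px
        · exact absurd (parThird h2 hsing hy hz) (ell_not_par hx)
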